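/- arXiv:1905.09562 — 2 statements merged into one kernel-verified Lean document; each statement's English description precedes it below -/
import Mathlib

section
/- Suppose γ ∈ [0,1), D ∈ (0.5,1] with D > γ, and rewards r(s) satisfy R_min ≤ r(s) ≤ R̃_max with D·R̃_max ≤ R_min. Define V_max = R̃_max / (1 - (γ + (1-D))) and V_min = R_min / (1 - (γ - (1-D))). If a noisy operator T̃ satisfies R_min + γV_min - (1-C)(V_max - V_min) ≤ T̃V(s) ≤ R̃_max + γV_max + (1-C)(V_max - V_min) for all s, and the threshold C satisfies (1-C)(V_max - V_min) ≤ (1-D)V_min, then V_min ≤ T̃V(s) ≤ V_max for all s; i.e., T̃ maps the set X = {V : ∀s, V_min ≤ V(s) ≤ V_max} into itself. -/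
/-- The noisy recurrent Bellman operator maps the set
`X = {V : ∀ s, Vmin ≤ V(s) ≤ Vmax}` into itself: under the reward-scaling
assumption `D·R̃max ≤ Rmin` and the threshold condition
`(1-C)(Vmax - Vmin) ≤ (1-D)Vmin`, the stated bounds on `T̃V` imply
`Vmin ≤ T̃V(s) ≤ Vmax` for all `s`. -/
theorem rvf_operator_maps_into_X {S : Type*}
    (γ D C Rmin Rmax Vmin Vmax : ℝ)
    (hγ : 0 ≤ γ) (hγ1 : γ < 1)
    (hD : 1/2 < D) (hD1 : D ≤ 1) (hDγ : γ < D)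
    (r : S → ℝ) (hr : ∀ s, Rmin ≤ r s ∧ r s ≤ Rmax)
    (hRpos : 0 < Rmin) (hscale : D * Rmax ≤ Rmin)
    (hVmax : Vmax = Rmax / (1 - (γ + (1 - D))))
    (hVmin : Vmin = Rmin / (1 - (γ - (1 - D))))
    (TV : S → ℝ)
    (hTub : ∀ s, TV s ≤ Rmax + γ * Vmax + (1 - C) * (Vmax - Vmin))
    (hTlb : ∀ s, Rmin + γ * Vmin - (1 - C) * (Vmax - Vmin) ≤ TV s)
    (hC : (1 - C) * (Vmax - Vmin) ≤ (1 - D) * Vmin) :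
    ∀ s, Vmin ≤ TV s ∧ TV s ≤ Vmax := by
  have ha : (0:ℝ) < D - γ := by linarith
  have hb : (0:ℝ) < 2 - D - γ := by linarith
  have hVa : Vmax * (D - γ) = Rmax := by
    rw [hVmax, show 1 - (γ + (1 - D)) = D - γ from by ring, div_mul_cancel₀ _ ha.ne']
  have hVb : Vmin * (2 - D - γ) = Rmin := by
    rw [hVmin, show 1 - (γ - (1 - D)) = 2 - D - γ from by ring, div_mul_cancel₀ _ hb.ne']
  intro s
  obtain ⟨h1, h2⟩ := hr s
  have hRR : Rmin ≤ Rmax := le_trans h1 h2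
  have hmm : Vmin ≤ Vmax := by nlinarith [mul_pos ha hb]
  constructor
  · have := hTlb s
    nlinarith
  · have := hTub s
    nlinarith [mul_nonneg (by linarith : (0:ℝ) ≤ 1 - D) (by linarith : (0:ℝ) ≤ Vmax - Vmin)]
end

section
/- Under the assumptions D ∈ (0.5,1], γ ∈ [0,1), γ + (1-D) < 1, if the regularization terms satisfy |Δ^V(s') - Δ^U(s')| ≤ (1-D)|V(s') - U(s')| for all value functions U, V and states s', then the operator T^β V(s_i) = E_π[r_t + γV(s_{t+1}) + Δ_t^V(s_i)] satisfies ‖T^β V - T^β U‖_∞ ≤ (γ + (1-D)) ‖V - U‖_∞, and γ + (1-D) < 1, so T^β is a contraction in the sup norm. -/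
open Finset

/-- The recurrent Bellman operator
`T^β V(s) = E_π[r + γ V(s') + Δ^V(s)]` is a sup-norm contraction with
modulus `γ + (1-D) < 1`, provided the regularization terms satisfy
`|Δ^V(s) - Δ^U(s)| ≤ (1-D)|V(s) - U(s)|`. -/
theorem rvf_operator_contraction {S : Type*} [Fintype S] [Nonempty S]
    (γ D : ℝ) (hγ : 0 ≤ γ) (hγ1 : γ < 1)
    (hD : 1/2 < D) (hD1 : D ≤ 1) (hcontr : γ + (1 - D) < 1)
    (P : S → S → ℝ) (hP : ∀ s s', 0 ≤ P s s')
    (hPsum : ∀ s, ∑ s' : S, P s s' = 1)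
    (r : S → ℝ)
    (Δ : (S → ℝ) → S → ℝ)
    (hΔ : ∀ (U V : S → ℝ) (s : S), |Δ V s - Δ U s| ≤ (1 - D) * |V s - U s|)
    (T : (S → ℝ) → S → ℝ)
    (hT : ∀ (V : S → ℝ) (s : S),
      T V s = ∑ s' : S, P s s' * (r s + γ * V s' + Δ V s)) :
    (∀ U V : S → ℝ,
      (⨆ s : S, |T V s - T U s|) ≤ (γ + (1 - D)) * ⨆ s : S, |V s - U s|) ∧
      γ + (1 - D) < 1 := by
  refine ⟨fun U V => ?_, hcontr⟩
  have hD0 : 0 ≤ 1 - D := by linarith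
  have hbdd : BddAbove (Set.range fun s : S => |V s - U s|) :=
    (Set.finite_range _).bddAbove
  have hsup0 : 0 ≤ ⨆ s : S, |V s - U s| :=
    le_trans (abs_nonneg _) (le_ciSup hbdd (Classical.arbitrary S))
  have hle : ∀ s : S, |V s - U s| ≤ ⨆ s : S, |V s - U s| :=
    fun s => le_ciSup hbdd s
  apply ciSup_le
  intro s
  have h1 : T V s - T U s =
      ∑ s' : S, P s s' * (γ * (V s' - U s') + (Δ V s - Δ U s)) := by
    rw [hT, hT, ← Finset.sum_sub_distrib]
    congr 1; ext s'; ring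
  rw [h1]
  calc |∑ s' : S, P s s' * (γ * (V s' - U s') + (Δ V s - Δ U s))|
      ≤ ∑ s' : S, |P s s' * (γ * (V s' - U s') + (Δ V s - Δ U s))| :=
        Finset.abs_sum_le_sum_abs _ _
    _ ≤ ∑ s' : S, P s s' * ((γ + (1 - D)) * ⨆ t : S, |V t - U t|) := by
        apply Finset.sum_le_sum
        intro s' _
        rw [abs_mul, abs_of_nonneg (hP s s')]
        apply mul_le_mul_of_nonneg_left _ (hP s s')
        calc |γ * (V s' - U s') + (Δ V s - Δ U s)|
            ≤ |γ * (V s' - U s')| + |Δ V s - Δ U s| := abs_add_le _ _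
          _ ≤ γ * |V s' - U s'| + (1 - D) * |V s - U s| := by
              rw [abs_mul, abs_of_nonneg hγ]
              exact add_le_add le_rfl (hΔ U V s)
          _ ≤ γ * (⨆ t : S, |V t - U t|) + (1 - D) * ⨆ t : S, |V t - U t| :=
              add_le_add (mul_le_mul_of_nonneg_left (hle s') hγ)
                (mul_le_mul_of_nonneg_left (hle s) hD0)
          _ = (γ + (1 - D)) * ⨆ t : S, |V t - U t| := by ring
    _ = (γ + (1 - D)) * ⨆ t : S, |V t - U t| := by
        rw [← Finset.sum_mul, hPsum, one_mul]
end
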